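/- Assuming j_{k-1} < √2·k for real k > 10 (where j_ν is the first positive zero of the Bessel function J_ν), for all even n = 2k with k > 10 one has γ(n)/U(n) = 2^(4k)·(k!)²·k^(2k) / ((2k)!·(j_{k-1})^(2k)) > 1, where γ(n) = 2^(n-2)n²Γ(n/2)²/(j_{n/2-1})^n and U(n) = n!/n^n. -/
import Mathlib

lemma choose_le_two_pow' (n i : ℕ) : Nat.choose n i ≤ 2 ^ n := by
  rcases le_or_gt i n with h | h
  · calc Nat.choose n i ≤ ∑ m ∈ Finset.range (n + 1), Nat.choose n m :=
        Finset.single_le_sum (fun m _ => Nat.zero_le _) (Finset.mem_range.mpr (by omega))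
      _ = 2 ^ n := Nat.sum_range_choose n
  · simp [Nat.choose_eq_zero_of_lt h]

lemma two_k_factorial_le (k : ℕ) :
    Nat.factorial (2 * k) ≤ 2 ^ (2 * k) * (Nat.factorial k) ^ 2 := by
  have h := Nat.choose_mul_factorial_mul_factorial (show k ≤ 2 * k by omega)
  have h2 : 2 * k - k = k := by omega
  rw [h2] at h
  calc Nat.factorial (2 * k) = Nat.choose (2 * k) k * Nat.factorial k * Nat.factorial k := h.symm
    _ ≤ 2 ^ (2 * k) * Nat.factorial k * Nat.factorial k := by
        gcongr; exact choose_le_two_pow' _ _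
    _ = 2 ^ (2 * k) * (Nat.factorial k) ^ 2 := by ring

/-- Even case `n = 2k`, `k > 10`:
`γ(n)/U(n) = 2^(4k) (k!)² k^(2k) / ((2k)! j_{k-1}^(2k)) > 1`,
where `j` is the first positive zero of `J_{k-1}`, assumed to satisfy `j < √2 k`. -/
theorem stmt_13 (k : ℕ) (hk : 10 < k) (j : ℝ) (hj0 : 0 < j)
    (hj : j < Real.sqrt 2 * k) :
    (2 : ℝ) ^ (2 * k - 2) * (2 * (k : ℝ)) ^ 2 * Real.Gamma (k : ℝ) ^ 2 * (2 * (k : ℝ)) ^ (2 * k) /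
        ((Nat.factorial (2 * k) : ℝ) * j ^ (2 * k)) =
      2 ^ (4 * k) * (Nat.factorial k : ℝ) ^ 2 * (k : ℝ) ^ (2 * k) /
        ((Nat.factorial (2 * k) : ℝ) * j ^ (2 * k)) ∧
    1 < 2 ^ (4 * k) * (Nat.factorial k : ℝ) ^ 2 * (k : ℝ) ^ (2 * k) /
        ((Nat.factorial (2 * k) : ℝ) * j ^ (2 * k)) := by
  obtain ⟨m, rfl⟩ : ∃ m, k = m + 1 := ⟨k - 1, by omega⟩
  constructor
  · have hnum : (2 : ℝ) ^ (2 * (m+1) - 2) * (2 * ((m+1) : ℕ) : ℝ) ^ 2 *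
        Real.Gamma (((m+1):ℕ) : ℝ) ^ 2 * (2 * (((m+1):ℕ) : ℝ)) ^ (2 * (m+1)) =
        2 ^ (4 * (m+1)) * (Nat.factorial (m+1) : ℝ) ^ 2 * (((m+1):ℕ) : ℝ) ^ (2 * (m+1)) := by
      have hG : Real.Gamma ((m + 1 : ℕ) : ℝ) = Nat.factorial m := by
        rw [Nat.cast_add, Nat.cast_one]
        exact_mod_cast Real.Gamma_nat_eq_factorial m
      have he : 2 * (m + 1) - 2 = 2 * m := by omega
      have hf : Nat.factorial (m + 1) = (m + 1) * Nat.factorial m := rfl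
      have h4 : 4 * (m + 1) = 2 * m + 2 * (m + 1) + 2 := by ring
      rw [hG, he, hf, h4, pow_add, pow_add]; simp only [mul_pow]
      push_cast
      ring
    rw [hnum]
  · set K := m + 1
    have hK : (0:ℝ) < K := by positivity
    have hD : (0:ℝ) < (Nat.factorial (2 * K) : ℝ) * j ^ (2 * K) := by positivity
    rw [one_lt_div hD]
    have h1 : j ^ (2 * K) < 2 ^ K * (K : ℝ) ^ (2 * K) := by
      calc j ^ (2 * K) < (Real.sqrt 2 * K) ^ (2 * K) := by
            apply pow_lt_pow_left₀ hj hj0.le (by omega)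
        _ = (Real.sqrt 2) ^ (2 * K) * (K : ℝ) ^ (2 * K) := by rw [mul_pow]
        _ = 2 ^ K * (K : ℝ) ^ (2 * K) := by
            rw [pow_mul, Real.sq_sqrt (by norm_num : (2:ℝ) ≥ 0)]
    have h2 : (Nat.factorial (2 * K) : ℝ) ≤ 2 ^ (2 * K) * (Nat.factorial K : ℝ) ^ 2 := by
      exact_mod_cast two_k_factorial_le K
    have h3 : (2:ℝ) ^ (2 * K) * (2:ℝ) ^ K ≤ 2 ^ (4 * K) := by
      rw [← pow_add]
      exact pow_le_pow_right₀ one_le_two (by omega)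
    calc (Nat.factorial (2 * K) : ℝ) * j ^ (2 * K)
        < (Nat.factorial (2 * K) : ℝ) * (2 ^ K * (K : ℝ) ^ (2 * K)) := by
          exact mul_lt_mul_of_pos_left h1 (by positivity)
      _ ≤ (2 ^ (2 * K) * (Nat.factorial K : ℝ) ^ 2) * (2 ^ K * (K : ℝ) ^ (2 * K)) := by
          have := mul_le_mul_of_nonneg_right h2
            (show (0:ℝ) ≤ 2 ^ K * (K : ℝ) ^ (2 * K) by positivity)
          exact this
      _ = ((2:ℝ) ^ (2 * K) * 2 ^ K) * ((Nat.factorial K : ℝ) ^ 2 * (K : ℝ) ^ (2 * K)) := by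
          ring
      _ ≤ 2 ^ (4 * K) * ((Nat.factorial K : ℝ) ^ 2 * (K : ℝ) ^ (2 * K)) := by
          exact mul_le_mul_of_nonneg_right h3 (by positivity)
      _ = 2 ^ (4 * K) * (Nat.factorial K : ℝ) ^ 2 * (K : ℝ) ^ (2 * K) := by ring
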